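/- arXiv:1409.0126 — 2 statements merged into one kernel-verified Lean document; each statement's English description precedes it below -/
import Mathlib

section
/- Let β > 0, c ≥ 0, and let (α_n) be a sequence of nonnegative reals with lim_{n→∞} α_n = c. Then the probability measures ν_{β,α_n} converge weakly to ν_{β,c}: for every bounded continuous function f : ℝ → ℝ, lim_{n→∞} ∫_ℝ f(t)·f_{β,α_n}(t) dt = ∫_ℝ f(t)·f_{β,c}(t) dt. -/
open MeasureTheory Real Filter Topology

/-- Left endpoint `a` of the support. -/
noncomputable def endA (β c : ℝ) : ℝ :=
  Real.sqrt (β / 2) * Real.sqrt (1 + 2 * c / β - Real.sqrt (1 + 4 * c / β))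

/-- Right endpoint `b` of the support. -/
noncomputable def endB (β c : ℝ) : ℝ :=
  Real.sqrt (β / 2) * Real.sqrt (1 + 2 * c / β + Real.sqrt (1 + 4 * c / β))

/-- The support `S = [−b,−a] ∪ [a,b]`. -/
def suppS (β c : ℝ) : Set ℝ :=
  Set.Icc (-(endB β c)) (-(endA β c)) ∪ Set.Icc (endA β c) (endB β c)

/-- The density `f_{β,c}` of the equilibrium measure `ν_{β,c}`. -/
noncomputable def densf (β c t : ℝ) : ℝ :=
  (suppS β c).indicator (fun t =>
    (2 / (Real.pi * β)) * (1 / |t|) *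
      Real.sqrt ((t ^ 2 - endA β c ^ 2) * (endB β c ^ 2 - t ^ 2))) t

lemma endA_nonneg (β c : ℝ) : 0 ≤ endA β c :=
  mul_nonneg (Real.sqrt_nonneg _) (Real.sqrt_nonneg _)

lemma endB_nonneg (β c : ℝ) : 0 ≤ endB β c :=
  mul_nonneg (Real.sqrt_nonneg _) (Real.sqrt_nonneg _)

lemma continuous_endA (β : ℝ) : Continuous (endA β) := by
  unfold endA; fun_prop

lemma continuous_endB (β : ℝ) : Continuous (endB β) := by
  unfold endB; fun_prop

lemma endB_mono (β : ℝ) (hβ : 0 < β) {c c' : ℝ} (h : c ≤ c') : endB β c ≤ endB β c' := by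
  unfold endB
  apply mul_le_mul_of_nonneg_left _ (Real.sqrt_nonneg _)
  apply Real.sqrt_le_sqrt
  have h1 : 2 * c / β ≤ 2 * c' / β := by gcongr
  have h2 : Real.sqrt (1 + 4 * c / β) ≤ Real.sqrt (1 + 4 * c' / β) := by
    apply Real.sqrt_le_sqrt; gcongr
  linarith

lemma mem_suppS_iff (β c t : ℝ) : t ∈ suppS β c ↔ endA β c ≤ |t| ∧ |t| ≤ endB β c := by
  have hA := endA_nonneg β c
  simp only [suppS, Set.mem_union, Set.mem_Icc]
  constructor
  · rintro (⟨h1, h2⟩ | ⟨h1, h2⟩)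
    · rw [abs_of_nonpos (by linarith)]; constructor <;> linarith
    · rw [abs_of_nonneg (by linarith)]; exact ⟨h1, h2⟩
  · rintro ⟨h1, h2⟩
    rcases le_total 0 t with h | h
    · right; rw [abs_of_nonneg h] at h1 h2; exact ⟨h1, h2⟩
    · left; rw [abs_of_nonpos h] at h1 h2; constructor <;> linarith

lemma densf_nonneg (β c t : ℝ) (hβ : 0 < β) : 0 ≤ densf β c t := by
  unfold densf
  apply Set.indicator_nonneg
  intro x _
  have := Real.pi_pos
  positivity

lemma densf_eq_zero (β c t : ℝ) (h : ¬ (endA β c ≤ |t| ∧ |t| ≤ endB β c)) :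
    densf β c t = 0 :=
  Set.indicator_of_notMem (fun hm => h ((mem_suppS_iff β c t).1 hm)) _

lemma densf_le (β c t : ℝ) (hβ : 0 < β) :
    densf β c t ≤ 2 / (Real.pi * β) * endB β c := by
  have hπ := Real.pi_pos
  have hB := endB_nonneg β c
  have hA := endA_nonneg β c
  unfold densf
  rcases em (t ∈ suppS β c) with h | h
  · rw [Set.indicator_of_mem h]
    obtain ⟨h1, h2⟩ := (mem_suppS_iff β c t).1 h
    rcases eq_or_ne t 0 with rfl | ht0
    · simp
      positivity
    · have habs : 0 < |t| := abs_pos.2 ht0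
      have hu : 0 ≤ t ^ 2 - endA β c ^ 2 := by nlinarith [sq_abs t]
      have hv : 0 ≤ endB β c ^ 2 - t ^ 2 := by nlinarith [sq_abs t, abs_nonneg t]
      have hsq : Real.sqrt ((t ^ 2 - endA β c ^ 2) * (endB β c ^ 2 - t ^ 2)) ≤ |t| * endB β c := by
        have h3 : (t ^ 2 - endA β c ^ 2) * (endB β c ^ 2 - t ^ 2) ≤ t ^ 2 * endB β c ^ 2 := by
          apply mul_le_mul (by nlinarith) (by nlinarith) hv (by positivity)
        calc Real.sqrt ((t ^ 2 - endA β c ^ 2) * (endB β c ^ 2 - t ^ 2))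
            ≤ Real.sqrt (t ^ 2 * endB β c ^ 2) := Real.sqrt_le_sqrt h3
          _ = |t| * endB β c := by
              rw [Real.sqrt_mul (by positivity), Real.sqrt_sq_eq_abs, Real.sqrt_sq hB]
      calc (2 / (Real.pi * β)) * (1 / |t|) *
            Real.sqrt ((t ^ 2 - endA β c ^ 2) * (endB β c ^ 2 - t ^ 2))
          ≤ (2 / (Real.pi * β)) * (1 / |t|) * (|t| * endB β c) := by
            apply mul_le_mul_of_nonneg_left hsq (by positivity)
        _ = 2 / (Real.pi * β) * endB β c := by
            field_simp
  · rw [Set.indicator_of_notMem h]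
    positivity

lemma measurable_densf (β c : ℝ) : Measurable (densf β c) := by
  unfold densf
  apply Measurable.indicator
  · fun_prop
  · exact measurableSet_Icc.union measurableSet_Icc

theorem stmt_6 (β c : ℝ) (hβ : 0 < β) (hc : 0 ≤ c) (α : ℕ → ℝ)
    (hα : ∀ n, 0 ≤ α n) (hlim : Filter.Tendsto α Filter.atTop (nhds c))
    (f : ℝ → ℝ) (hf : Continuous f) (hbd : ∃ M : ℝ, ∀ x, |f x| ≤ M) :
    Filter.Tendsto (fun n => ∫ t : ℝ, f t * densf β (α n) t) Filter.atTop
      (nhds (∫ t : ℝ, f t * densf β c t)) := by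
  obtain ⟨M, hM⟩ := hbd
  have hM0 : 0 ≤ M := le_trans (abs_nonneg _) (hM 0)
  have hπ := Real.pi_pos
  set A := endA β c with hAdef
  set B := endB β c with hBdef
  have htA : Tendsto (fun n => endA β (α n)) atTop (𝓝 A) :=
    ((continuous_endA β).tendsto c).comp hlim
  have htB : Tendsto (fun n => endB β (α n)) atTop (𝓝 B) :=
    ((continuous_endB β).tendsto c).comp hlim
  set B' := endB β (c + 1) with hB'def
  have hB'0 : 0 ≤ B' := endB_nonneg β (c + 1)
  set bound : ℝ → ℝ :=
    Set.indicator (Set.Icc (-B') B') (fun _ => M * (2 / (Real.pi * β) * B')) with hbdef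
  apply tendsto_integral_filter_of_dominated_convergence bound
  · exact Filter.Eventually.of_forall fun n =>
      (hf.aestronglyMeasurable.mul (measurable_densf β (α n)).aestronglyMeasurable)
  · filter_upwards [hlim.eventually_le_const (lt_add_one c)] with n hn
    refine Filter.Eventually.of_forall fun t => ?_
    have hBn : endB β (α n) ≤ B' := endB_mono β hβ hn
    rcases le_or_gt |t| B' with h | h
    · have hb : bound t = M * (2 / (Real.pi * β) * B') := by
        apply Set.indicator_of_mem
        rw [Set.mem_Icc]
        constructor <;> [linarith [neg_abs_le t]; linarith [le_abs_self t]]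
      rw [hb, Real.norm_eq_abs, abs_mul,
        abs_of_nonneg (densf_nonneg β (α n) t hβ)]
      apply mul_le_mul (hM t) _ (densf_nonneg β (α n) t hβ) hM0
      calc densf β (α n) t ≤ 2 / (Real.pi * β) * endB β (α n) := densf_le β (α n) t hβ
        _ ≤ 2 / (Real.pi * β) * B' := by
            apply mul_le_mul_of_nonneg_left hBn (by positivity)
    · have hz : densf β (α n) t = 0 := by
        apply densf_eq_zero
        rintro ⟨-, h2⟩
        linarith
      have hb0 : bound t = 0 := by
        apply Set.indicator_of_notMem
        rw [Set.mem_Icc]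
        rintro ⟨h1, h2⟩
        rcases abs_cases t with ⟨he, -⟩ | ⟨he, -⟩ <;> linarith
      rw [hz, hb0, mul_zero, norm_zero]
  · exact (integrable_indicator_iff measurableSet_Icc).2
      (integrableOn_const measure_Icc_lt_top.ne)
  · have hnull : (volume : Measure ℝ) {t : ℝ | |t| = A ∨ |t| = B} = 0 := by
      have hfin : (volume : Measure ℝ) ({-A, A, -B, B} : Set ℝ) = 0 :=
(Set.toFinite _).measure_zero _
      apply measure_mono_null _ hfin
      intro t ht
      rcases ht with h | h
      · rcases (abs_eq (endA_nonneg β c)).1 h with h | h <;> simp [h, hAdef]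
      · rcases (abs_eq (endB_nonneg β c)).1 h with h | h <;> simp [h, hBdef]
    have hae : ∀ᵐ t : ℝ, ¬(|t| = A ∨ |t| = B) := by
      rw [ae_iff]
      simpa only [not_not] using hnull
    filter_upwards [hae] with t ht
    push_neg at ht
    obtain ⟨htA', htB'⟩ := ht
    rcases lt_trichotomy |t| A with h1 | h1 | h1
    · -- |t| < A : eventually zero
      have hev : ∀ᶠ n in atTop, densf β (α n) t = 0 := by
        filter_upwards [htA.eventually_const_lt h1] with n hn
        exact densf_eq_zero β (α n) t (fun h => absurd h.1 (not_le.2 hn))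
      have h0 : f t * densf β c t = 0 := by
        rw [densf_eq_zero β c t (fun h => absurd h.1 (not_le.2 h1)), mul_zero]
      rw [h0]
      apply Tendsto.congr' (f₁ := fun _ => (0 : ℝ)) _ tendsto_const_nhds
      filter_upwards [hev] with n hn
      rw [hn, mul_zero]
    · exact absurd h1 htA'
    · rcases lt_trichotomy |t| B with h2 | h2 | h2
      · -- A < |t| < B : eventually in the support
        set G : ℝ → ℝ := fun c' => (2 / (Real.pi * β)) * (1 / |t|) *
          Real.sqrt ((t ^ 2 - endA β c' ^ 2) * (endB β c' ^ 2 - t ^ 2)) with hGdef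
        have hG : Continuous G := by
          apply Continuous.mul continuous_const
          apply Real.continuous_sqrt.comp
          apply Continuous.mul
          · exact (continuous_const.sub (((continuous_endA β).pow 2)))
          · exact (((continuous_endB β).pow 2).sub continuous_const)
        have hgt : Tendsto (fun n => G (α n)) atTop (𝓝 (G c)) := (hG.tendsto c).comp hlim
        have hev : ∀ᶠ n in atTop, f t * densf β (α n) t = f t * G (α n) := by
          filter_upwards [htA.eventually_lt_const h1, htB.eventually_const_lt h2] with n hn1 hn2
          congr 1
          exact Set.indicator_of_mem ((mem_suppS_iff β (α n) t).2 ⟨hn1.le, hn2.le⟩) _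
        have heq : f t * densf β c t = f t * G c := by
          congr 1
          exact Set.indicator_of_mem ((mem_suppS_iff β c t).2 ⟨h1.le, h2.le⟩) _
        rw [heq]
        exact Tendsto.congr' (hev.mono fun n hn => hn.symm)
          (tendsto_const_nhds.mul hgt)
      · exact absurd h2 htB'
      · -- B < |t| : eventually zero
        have hev : ∀ᶠ n in atTop, densf β (α n) t = 0 := by
          filter_upwards [htB.eventually_lt_const h2] with n hn
          exact densf_eq_zero β (α n) t (fun h => absurd h.2 (not_le.2 hn))
        have h0 : f t * densf β c t = 0 := by
          rw [densf_eq_zero β c t (fun h => absurd h.2 (not_le.2 h2)), mul_zero]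
        rw [h0]
        apply Tendsto.congr' (f₁ := fun _ => (0 : ℝ)) _ tendsto_const_nhds
        filter_upwards [hev] with n hn
        rw [hn, mul_zero]
end

section
/- Let β > 0 and c ≥ 0. Then ∫_ℝ f_{β,c}(t) dt = 1; equivalently, (4/(πβ))·∫_a^b (1/t)·sqrt((t²−a²)(b²−t²)) dt = 1. -/
open MeasureTheory Real Filter Topology

open Set

noncomputable def Fant (a b t : ℝ) : ℝ :=
  (1/2) * ( Real.sqrt ((t^2 - a^2) * (b^2 - t^2))
    + ((a^2 + b^2)/2) * Real.arcsin ((2*t^2 - a^2 - b^2)/(b^2 - a^2))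
    - a*b * Real.arcsin (((a^2 + b^2)*t^2 - 2*a^2*b^2)/(t^2*(b^2 - a^2))) )

lemma key_deriv (a b t : ℝ) (ha : 0 < a) (hab : a < b) (hta : a < t) (htb : t < b) :
    HasDerivAt (Fant a b) ((1/t) * Real.sqrt ((t^2 - a^2) * (b^2 - t^2))) t := by
  have ht0 : 0 < t := ha.trans hta
  have hu : 0 < (t^2 - a^2) * (b^2 - t^2) := mul_pos (by nlinarith) (by nlinarith)
  have hs0 : 0 < Real.sqrt ((t^2 - a^2) * (b^2 - t^2)) := Real.sqrt_pos.2 hu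
  set s := Real.sqrt ((t^2 - a^2) * (b^2 - t^2)) with hsdef
  have hs2 : s^2 = (t^2 - a^2) * (b^2 - t^2) := Real.sq_sqrt hu.le
  have hba : 0 < b^2 - a^2 := by nlinarith
  have hdenpos : 0 < t^2*(b^2 - a^2) := by positivity
  -- derivative of u and sqrt u
  have d_u : HasDerivAt (fun x : ℝ => (x^2 - a^2) * (b^2 - x^2))
      ((2*t)*(b^2 - t^2) + (t^2 - a^2)*(-(2*t))) t := by
    have h1 : HasDerivAt (fun x : ℝ => x^2 - a^2) (2*t) t := by
      simpa using (hasDerivAt_pow 2 t).sub_const (a^2)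
    have h2 : HasDerivAt (fun x : ℝ => b^2 - x^2) (-(2*t)) t := by
      simpa using (hasDerivAt_pow 2 t).const_sub (b^2)
    exact h1.mul h2
  have d_sqrt : HasDerivAt (fun x : ℝ => Real.sqrt ((x^2 - a^2) * (b^2 - x^2)))
      (((2*t)*(b^2 - t^2) + (t^2 - a^2)*(-(2*t))) / (2*s)) t := d_u.sqrt hu.ne'
  -- arcsin v term
  have d_v : HasDerivAt (fun x : ℝ => (2*x^2 - a^2 - b^2)/(b^2 - a^2)) (4*t/(b^2 - a^2)) t := by
    have h1 : HasDerivAt (fun x : ℝ => 2*x^2 - a^2 - b^2) (4*t) t := by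
      have := (((hasDerivAt_pow 2 t).const_mul 2).sub_const (a^2)).sub_const (b^2)
      simpa using this.congr_deriv (by ring)
    exact h1.div_const (b^2 - a^2)
  have hv1 : (-1 : ℝ) < (2*t^2 - a^2 - b^2)/(b^2 - a^2) := by
    rw [lt_div_iff₀ hba]; nlinarith
  have hv2 : (2*t^2 - a^2 - b^2)/(b^2 - a^2) < 1 := by
    rw [div_lt_one hba]; nlinarith
  have d_asinv : HasDerivAt (fun x : ℝ => Real.arcsin ((2*x^2 - a^2 - b^2)/(b^2 - a^2)))
      ((1 / Real.sqrt (1 - ((2*t^2 - a^2 - b^2)/(b^2 - a^2))^2)) * (4*t/(b^2 - a^2))) t :=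
    by have := (Real.hasDerivAt_arcsin (ne_of_gt hv1) (ne_of_lt hv2)).comp t d_v; exact this
  have hsv : Real.sqrt (1 - ((2*t^2 - a^2 - b^2)/(b^2 - a^2))^2) = 2*s/(b^2 - a^2) := by
    have h : 1 - ((2*t^2 - a^2 - b^2)/(b^2 - a^2))^2 = (2*s/(b^2 - a^2))^2 := by
      rw [div_pow, div_pow, mul_pow, hs2]; field_simp; ring
    rw [h, Real.sqrt_sq (by positivity)]
  -- arcsin w term
  have d_w : HasDerivAt (fun x : ℝ => ((a^2 + b^2)*x^2 - 2*a^2*b^2)/(x^2*(b^2 - a^2)))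
      ((((a^2+b^2)*(2*t)) * (t^2*(b^2-a^2)) - ((a^2+b^2)*t^2 - 2*a^2*b^2) * (2*t*(b^2-a^2)))
        / (t^2*(b^2-a^2))^2) t := by
    have h1 : HasDerivAt (fun x : ℝ => (a^2 + b^2)*x^2 - 2*a^2*b^2) ((a^2+b^2)*(2*t)) t := by
      have := ((hasDerivAt_pow 2 t).const_mul (a^2+b^2)).sub_const (2*a^2*b^2)
      simpa using this.congr_deriv (by ring)
    have h2 : HasDerivAt (fun x : ℝ => x^2*(b^2 - a^2)) (2*t*(b^2-a^2)) t := by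
      have := (hasDerivAt_pow 2 t).mul_const (b^2 - a^2)
      simpa using this.congr_deriv (by ring)
    exact h1.div h2 hdenpos.ne'
  have hw1 : (-1 : ℝ) < ((a^2 + b^2)*t^2 - 2*a^2*b^2)/(t^2*(b^2 - a^2)) := by
    rw [lt_div_iff₀ hdenpos]
    nlinarith [mul_pos (pow_pos (ha.trans hab) 2) (show (0:ℝ) < t^2 - a^2 by nlinarith)]
  have hw2 : ((a^2 + b^2)*t^2 - 2*a^2*b^2)/(t^2*(b^2 - a^2)) < 1 := by
    rw [div_lt_one hdenpos]
    nlinarith [mul_pos (pow_pos ha 2) (show (0:ℝ) < b^2 - t^2 by nlinarith)]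
  have d_asinw : HasDerivAt (fun x : ℝ => Real.arcsin (((a^2 + b^2)*x^2 - 2*a^2*b^2)/(x^2*(b^2 - a^2))))
      ((1 / Real.sqrt (1 - (((a^2 + b^2)*t^2 - 2*a^2*b^2)/(t^2*(b^2 - a^2)))^2)) *
        ((((a^2+b^2)*(2*t)) * (t^2*(b^2-a^2)) - ((a^2+b^2)*t^2 - 2*a^2*b^2) * (2*t*(b^2-a^2)))
        / (t^2*(b^2-a^2))^2)) t :=
    by have := (Real.hasDerivAt_arcsin (ne_of_gt hw1) (ne_of_lt hw2)).comp t d_w; exact this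
  have hsw : Real.sqrt (1 - (((a^2 + b^2)*t^2 - 2*a^2*b^2)/(t^2*(b^2 - a^2)))^2)
      = 2*a*b*s/(t^2*(b^2 - a^2)) := by
    have e : (2*a*b*s/(t^2*(b^2 - a^2)))^2
        = 4*a^2*b^2*((t^2-a^2)*(b^2-t^2))/(t^2*(b^2-a^2))^2 := by
      rw [div_pow, (by ring : (2*a*b*s)^2 = 4*a^2*b^2*s^2), hs2]
    have h : 1 - (((a^2 + b^2)*t^2 - 2*a^2*b^2)/(t^2*(b^2 - a^2)))^2
        = (2*a*b*s/(t^2*(b^2 - a^2)))^2 := by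
      rw [e]; field_simp; ring
    have hnn : 0 ≤ 2*a*b*s/(t^2*(b^2 - a^2)) :=
      div_nonneg (mul_pos (mul_pos (mul_pos two_pos ha) (ha.trans hab)) hs0).le hdenpos.le
    rw [h, Real.sqrt_sq hnn]
  have dF := (((d_sqrt.add (d_asinv.const_mul ((a^2+b^2)/2))).sub
      (d_asinw.const_mul (a*b))).const_mul (1/2 : ℝ))
  have : HasDerivAt (Fant a b) _ t := dF
  convert this using 1
  rw [hsv, hsw]
  have hane : a ≠ 0 := ha.ne'
  have hbne : b ≠ 0 := (ha.trans hab).ne'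
  field_simp
  linear_combination 8 * hs2

lemma key_int (a b : ℝ) (ha : 0 < a) (hab : a < b) :
    ∫ t in a..b, (1/t) * Real.sqrt ((t^2 - a^2) * (b^2 - t^2)) = Real.pi * (b-a)^2 / 4 := by
  have hb : 0 < b := ha.trans hab
  have hba : 0 < b^2 - a^2 := by nlinarith
  have hcont : ContinuousOn (Fant a b) (Icc a b) := by
    have c1 : Continuous fun t : ℝ => Real.sqrt ((t^2 - a^2) * (b^2 - t^2)) :=
      Real.continuous_sqrt.comp (by continuity)
    have c2 : Continuous fun t : ℝ =>
        ((a^2 + b^2)/2) * Real.arcsin ((2*t^2 - a^2 - b^2)/(b^2 - a^2)) :=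
      continuous_const.mul (Real.continuous_arcsin.comp (by continuity))
    have c3 : ContinuousOn (fun t : ℝ =>
        a*b * Real.arcsin (((a^2 + b^2)*t^2 - 2*a^2*b^2)/(t^2*(b^2 - a^2)))) (Icc a b) := by
      apply continuousOn_const.mul
      apply Real.continuous_arcsin.comp_continuousOn
      apply ContinuousOn.div (by fun_prop) (by fun_prop)
      intro x hx
      have hx0 : 0 < x := lt_of_lt_of_le ha hx.1
      positivity
    exact continuousOn_const.mul (((c1.continuousOn.add c2.continuousOn).sub c3))
  have hderiv : ∀ x ∈ Ioo a b, HasDerivWithinAt (Fant a b)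
      ((1/x) * Real.sqrt ((x^2 - a^2) * (b^2 - x^2))) (Ioi x) x :=
    fun x hx => (key_deriv a b x ha hab hx.1 hx.2).hasDerivWithinAt
  have hint : IntervalIntegrable (fun t : ℝ => (1/t) * Real.sqrt ((t^2 - a^2) * (b^2 - t^2)))
      volume a b := by
    apply ContinuousOn.intervalIntegrable
    rw [uIcc_of_le hab.le]
    apply ContinuousOn.mul
    · exact continuousOn_const.div continuousOn_id (fun x hx => (lt_of_lt_of_le ha hx.1).ne')
    · exact (Real.continuous_sqrt.comp (by continuity)).continuousOn
  rw [intervalIntegral.integral_eq_sub_of_hasDeriv_right_of_le hab.le hcont hderiv hint]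
  have e1 : (2*b^2 - a^2 - b^2)/(b^2 - a^2) = 1 := by
    rw [div_eq_one_iff_eq hba.ne']; ring
  have e2 : ((a^2 + b^2)*b^2 - 2*a^2*b^2)/(b^2*(b^2 - a^2)) = 1 := by
    rw [div_eq_one_iff_eq (by positivity)]; ring
  have e3 : (2*a^2 - a^2 - b^2)/(b^2 - a^2) = -1 := by
    rw [div_eq_iff hba.ne']; ring
  have e4 : ((a^2 + b^2)*a^2 - 2*a^2*b^2)/(a^2*(b^2 - a^2)) = -1 := by
    rw [div_eq_iff (by positivity : a^2*(b^2-a^2) ≠ 0)]; ring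
  unfold Fant
  rw [e1, e2, e3, e4, Real.arcsin_one, Real.arcsin_neg_one,
    (by ring : (b^2 - a^2)*(b^2 - b^2) = 0), (by ring : (a^2 - a^2)*(b^2 - a^2) = 0),
    Real.sqrt_zero]
  ring

lemma key0_deriv (b x : ℝ) (hb : 0 < b) (hx0 : 0 < x) (hxb : x < b) :
    HasDerivAt (fun t : ℝ => (1/2) * (t * Real.sqrt (b^2 - t^2) + b^2 * Real.arcsin (t/b)))
      (Real.sqrt (b^2 - x^2)) x := by
  have hu : 0 < b^2 - x^2 := by nlinarith
  have hs0 : 0 < Real.sqrt (b^2 - x^2) := Real.sqrt_pos.2 hu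
  set s := Real.sqrt (b^2 - x^2) with hsdef
  have hs2 : s^2 = b^2 - x^2 := Real.sq_sqrt hu.le
  have dsq : HasDerivAt (fun t : ℝ => Real.sqrt (b^2 - t^2)) (-(2*x)/(2*s)) x := by
    have h2 : HasDerivAt (fun t : ℝ => b^2 - t^2) (-(2*x)) x := by
      simpa using (hasDerivAt_pow 2 x).const_sub (b^2)
    exact h2.sqrt hu.ne'
  have d1 : HasDerivAt (fun t : ℝ => t * Real.sqrt (b^2 - t^2))
      (1 * s + x * (-(2*x)/(2*s))) x := (hasDerivAt_id x).mul dsq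
  have hdb : (0:ℝ) < x/b := by positivity
  have hdb2 : x/b < 1 := (div_lt_one hb).2 hxb
  have d2 : HasDerivAt (fun t : ℝ => Real.arcsin (t/b))
      ((1 / Real.sqrt (1 - (x/b)^2)) * (1/b)) x :=
    by have := (Real.hasDerivAt_arcsin (by linarith) (ne_of_lt hdb2)).comp x ((hasDerivAt_id x).div_const b); exact this
  have hsv : Real.sqrt (1 - (x/b)^2) = s/b := by
    have h : 1 - (x/b)^2 = (s/b)^2 := by
      rw [div_pow, div_pow, hs2]; field_simp
    rw [h, Real.sqrt_sq (by positivity)]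
  have dF := (d1.add (d2.const_mul (b^2))).const_mul (1/2 : ℝ)
  refine dF.congr_deriv ?_
  rw [hsv]
  field_simp
  linear_combination (-1) * hs2

lemma key0_int (b : ℝ) (hb : 0 < b) :
    ∫ t in (0:ℝ)..b, (1/t) * Real.sqrt ((t^2 - 0^2) * (b^2 - t^2)) = Real.pi * b^2 / 4 := by
  have hcongr : ∫ t in (0:ℝ)..b, (1/t) * Real.sqrt ((t^2 - 0^2) * (b^2 - t^2))
      = ∫ t in (0:ℝ)..b, Real.sqrt (b^2 - t^2) := by
    rw [intervalIntegral.integral_of_le hb.le, intervalIntegral.integral_of_le hb.le]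
    apply setIntegral_congr_fun measurableSet_Ioc
    intro x hx
    have hx0 : 0 < x := hx.1
    show (1/x) * Real.sqrt ((x^2 - 0^2) * (b^2 - x^2)) = Real.sqrt (b^2 - x^2)
    rw [(by ring : x^2 - 0^2 = x^2), Real.sqrt_mul (sq_nonneg x), Real.sqrt_sq hx0.le]
    field_simp
  rw [hcongr]
  have hcont : ContinuousOn
      (fun t : ℝ => (1/2) * (t * Real.sqrt (b^2 - t^2) + b^2 * Real.arcsin (t/b))) (Icc 0 b) := by
    apply Continuous.continuousOn
    exact continuous_const.mul (((continuous_id.mul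
      (Real.continuous_sqrt.comp (by continuity)))).add
      (continuous_const.mul (Real.continuous_arcsin.comp (continuous_id.div_const b))))
  have hderiv : ∀ x ∈ Ioo 0 b, HasDerivWithinAt
      (fun t : ℝ => (1/2) * (t * Real.sqrt (b^2 - t^2) + b^2 * Real.arcsin (t/b)))
      (Real.sqrt (b^2 - x^2)) (Ioi x) x :=
    fun x hx => (key0_deriv b x hb hx.1 hx.2).hasDerivWithinAt
  have hint : IntervalIntegrable (fun t : ℝ => Real.sqrt (b^2 - t^2)) volume 0 b :=
    (Real.continuous_sqrt.comp (by continuity)).intervalIntegrable 0 b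
  rw [intervalIntegral.integral_eq_sub_of_hasDeriv_right_of_le hb.le hcont hderiv hint]
  rw [div_self hb.ne', Real.arcsin_one, (by ring : b^2 - b^2 = 0), Real.sqrt_zero,
    zero_div, Real.arcsin_zero]
  ring

lemma endpoints_facts (β c : ℝ) (hβ : 0 < β) (hc : 0 ≤ c) :
    0 ≤ endA β c ∧ 0 < endB β c ∧ endA β c < endB β c ∧
    (endB β c - endA β c)^2 = β ∧ endA β c * endB β c = c ∧
    (0 < c → 0 < endA β c) ∧ (c = 0 → endA β c = 0) := by
  have hβ' : (β:ℝ) ≠ 0 := hβ.ne'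
  set s : ℝ := Real.sqrt (1 + 4 * c / β) with hsdef
  have hcb : 0 ≤ 2 * c / β := div_nonneg (by linarith) hβ.le
  have hcb4 : 0 ≤ 4 * c / β := div_nonneg (by linarith) hβ.le
  have hs2 : s^2 = 1 + 4 * c / β := Real.sq_sqrt (by linarith)
  have hs1 : 1 ≤ s := by
    rw [show (1:ℝ) = Real.sqrt 1 from (Real.sqrt_one).symm]
    exact Real.sqrt_le_sqrt (by linarith)
  have hXle : s ≤ 1 + 2 * c / β := by
    have h1 : 1 + 4 * c / β ≤ (1 + 2 * c / β)^2 := by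
      have h := sq_nonneg (c/β)
      have e : (1 + 2*c/β)^2 = 1 + 4*c/β + 4*(c/β)^2 := by field_simp; ring
      linarith
    calc s ≤ Real.sqrt ((1 + 2 * c / β)^2) := Real.sqrt_le_sqrt h1
    _ = 1 + 2 * c / β := Real.sqrt_sq (by linarith)
  have hXnn : 0 ≤ 1 + 2 * c / β - s := by linarith
  have hYpos : 0 < 1 + 2 * c / β + s := by linarith
  have ha0 : 0 ≤ endA β c := by unfold endA; positivity
  have hb0 : 0 < endB β c := by
    unfold endB
    exact mul_pos (Real.sqrt_pos.2 (by linarith)) (Real.sqrt_pos.2 hYpos)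
  have ha2 : endA β c ^ 2 = (β/2) * (1 + 2 * c / β - s) := by
    rw [endA, mul_pow, Real.sq_sqrt (by linarith), Real.sq_sqrt hXnn]
  have hb2 : endB β c ^ 2 = (β/2) * (1 + 2 * c / β + s) := by
    rw [endB, mul_pow, Real.sq_sqrt (by linarith), Real.sq_sqrt hYpos.le]
  have hsum : endA β c ^ 2 + endB β c ^ 2 = β + 2*c := by
    rw [ha2, hb2]; field_simp; ring
  have hprod : endA β c * endB β c = c := by
    have h1 : endA β c * endB β c = (Real.sqrt (β/2) * Real.sqrt (β/2)) *
        (Real.sqrt (1 + 2*c/β - s) * Real.sqrt (1 + 2*c/β + s)) := by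
      rw [endA, endB]; ring
    have h2 : (1 + 2*c/β - s) * (1 + 2*c/β + s) = (2*c/β)^2 := by
      rw [show (1 + 2*c/β - s) * (1 + 2*c/β + s) = (1 + 2*c/β)^2 - s^2 from by ring, hs2]
      field_simp; ring
    rw [h1, Real.mul_self_sqrt (by linarith), ← Real.sqrt_mul hXnn, h2,
      Real.sqrt_sq hcb]
    field_simp
  have hab : endA β c ≤ endB β c := by
    unfold endA endB
    exact mul_le_mul_of_nonneg_left (Real.sqrt_le_sqrt (by linarith)) (Real.sqrt_nonneg _)
  have hdiff : (endB β c - endA β c)^2 = β := by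
    linear_combination hsum - 2 * hprod
  have haltb : endA β c < endB β c := by
    rcases eq_or_lt_of_le hab with h | h
    · exfalso; rw [← h] at hdiff; simp at hdiff; linarith
    · exact h
  refine ⟨ha0, hb0, haltb, hdiff, hprod, ?_, ?_⟩
  · intro hc0
    unfold endA
    refine mul_pos (Real.sqrt_pos.2 (by linarith)) (Real.sqrt_pos.2 ?_)
    have h1 : 1 + 4 * c / β < (1 + 2 * c / β)^2 := by
      have h := pow_pos (div_pos hc0 hβ) 2
      have e : (1 + 2*c/β)^2 = 1 + 4*c/β + 4*(c/β)^2 := by field_simp; ring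
      linarith
    have : s < 1 + 2 * c / β := by
      calc s < Real.sqrt ((1 + 2 * c / β)^2) := Real.sqrt_lt_sqrt (by linarith) h1
      _ = 1 + 2 * c / β := Real.sqrt_sq (by linarith)
    linarith
  · intro hc0
    subst hc0
    rw [endA]
    norm_num

theorem stmt_17 (β c : ℝ) (hβ : 0 < β) (hc : 0 ≤ c) :
    (∫ t : ℝ, densf β c t) = 1 ∧
    (4 / (Real.pi * β)) *
      (∫ t in (endA β c)..(endB β c),
        (1 / t) * Real.sqrt ((t ^ 2 - endA β c ^ 2) * (endB β c ^ 2 - t ^ 2))) = 1 := by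
  obtain ⟨ha0, hb0, haltb, hdiff, hprod, hapos, hazero⟩ := endpoints_facts β c hβ hc
  set a := endA β c with hadef
  set b := endB β c with hbdef
  have hπ : (0:ℝ) < Real.pi := Real.pi_pos
  have hI : ∫ t in a..b, (1 / t) * Real.sqrt ((t ^ 2 - a ^ 2) * (b ^ 2 - t ^ 2))
      = Real.pi * β / 4 := by
    rcases eq_or_lt_of_le hc with hc0 | hc0
    · have haz : a = 0 := hazero hc0.symm
      have hb2 : b ^ 2 = β := by
        have h := hdiff; rw [haz] at h; simpa using h
      rw [haz, key0_int b hb0, hb2]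
    · rw [key_int a b (hapos hc0) haltb, hdiff]
  constructor
  swap
  · rw [hI]; field_simp
  set f : ℝ → ℝ := fun t =>
    (2 / (Real.pi * β)) * (1 / |t|) *
      Real.sqrt ((t ^ 2 - a ^ 2) * (b ^ 2 - t ^ 2)) with hfdef
  have hmeas : Measurable f := by
    apply Measurable.mul
    apply Measurable.mul measurable_const
    · exact (measurable_const.div (measurable_id.abs))
    · exact Real.continuous_sqrt.measurable.comp (by measurability)
  have hbound : ∀ x : ℝ, a ≤ |x| → |x| ≤ b → ‖f x‖ ≤ 2 / (Real.pi * β) * b := by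
    intro x h1 h2
    have hxb : 0 ≤ b := le_trans (abs_nonneg x) h2
    have hnn : 0 ≤ f x := by
      apply mul_nonneg (mul_nonneg (by positivity) (by positivity)) (Real.sqrt_nonneg _)
    rw [Real.norm_eq_abs, abs_of_nonneg hnn]
    rcases eq_or_lt_of_le (abs_nonneg x) with hx0 | hx0
    · have hx : x = 0 := abs_eq_zero.1 hx0.symm
      rw [hfdef]
      simp only [hx, abs_zero, div_zero, mul_zero, zero_mul]
      positivity
    · have ha2x : a ^ 2 ≤ x ^ 2 := by
        have := pow_le_pow_left₀ ha0 h1 2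
        rwa [sq_abs] at this
      have hx2b : x ^ 2 ≤ b ^ 2 := by
        have := pow_le_pow_left₀ (abs_nonneg x) h2 2
        rwa [sq_abs] at this
      have hsq : (x ^ 2 - a ^ 2) * (b ^ 2 - x ^ 2) ≤ x ^ 2 * b ^ 2 := by
        apply mul_le_mul (by nlinarith [sq_nonneg a]) (by nlinarith [sq_nonneg x]) (by linarith) (sq_nonneg x)
      calc f x ≤ 2 / (Real.pi * β) * (1 / |x|) * Real.sqrt (x ^ 2 * b ^ 2) := by
            apply mul_le_mul_of_nonneg_left (Real.sqrt_le_sqrt hsq) (by positivity)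
        _ = 2 / (Real.pi * β) * b := by
            rw [Real.sqrt_mul (sq_nonneg x), Real.sqrt_sq_eq_abs,
              Real.sqrt_sq hxb]
            field_simp
  have hint2 : IntegrableOn f (Icc a b) volume := by
    apply Measure.integrableOn_of_bounded (M := 2 / (Real.pi * β) * b)
      measure_Icc_lt_top.ne hmeas.aestronglyMeasurable
    refine (ae_restrict_iff' measurableSet_Icc).2 (ae_of_all _ fun x hx => ?_)
    have hxx : |x| = x := abs_of_nonneg (le_trans ha0 hx.1)
    exact hbound x (by rw [hxx]; exact hx.1) (by rw [hxx]; exact hx.2)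
  have hint1 : IntegrableOn f (Icc (-b) (-a)) volume := by
    apply Measure.integrableOn_of_bounded (M := 2 / (Real.pi * β) * b)
      measure_Icc_lt_top.ne hmeas.aestronglyMeasurable
    refine (ae_restrict_iff' measurableSet_Icc).2 (ae_of_all _ fun x hx => ?_)
    have hxx : |x| = -x := abs_of_nonpos (by linarith [hx.2])
    exact hbound x (by rw [hxx]; linarith [hx.2]) (by rw [hxx]; linarith [hx.1])
  have hdisj : AEDisjoint volume (Icc (-b) (-a)) (Icc a b) := by
    refine measure_mono_null (t := {(0:ℝ)}) ?_ Real.volume_singleton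
    intro x hx
    obtain ⟨⟨_, h1⟩, h2, _⟩ := hx
    have : x = 0 := le_antisymm (by linarith) (by linarith)
    simp [this]
  have hLR : ∫ t in Icc (-b) (-a), f t = ∫ t in Icc a b, f t := by
    rw [integral_Icc_eq_integral_Ioc, integral_Icc_eq_integral_Ioc,
      ← intervalIntegral.integral_of_le (by linarith : -b ≤ -a),
      ← intervalIntegral.integral_of_le haltb.le,
      ← intervalIntegral.integral_comp_neg]
    apply intervalIntegral.integral_congr
    intro x _
    rw [hfdef]
    simp only [abs_neg, neg_sq]
  have hright : ∫ t in Icc a b, f t = 2 / (Real.pi * β) * (Real.pi * β / 4) := by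
    rw [integral_Icc_eq_integral_Ioc]
    have hcg : ∫ t in Ioc a b, f t = ∫ t in Ioc a b,
        (2 / (Real.pi * β)) * ((1 / t) * Real.sqrt ((t ^ 2 - a ^ 2) * (b ^ 2 - t ^ 2))) := by
      apply setIntegral_congr_fun measurableSet_Ioc
      intro x hx
      have hx0 : 0 < x := lt_of_le_of_lt ha0 hx.1
      show f x = _
      rw [hfdef]
      simp only []
      rw [abs_of_pos hx0]
      ring
    rw [hcg, integral_const_mul, ← intervalIntegral.integral_of_le haltb.le, hI]
  have hS : MeasurableSet (suppS β c) := measurableSet_Icc.union measurableSet_Icc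
  have : (∫ t : ℝ, densf β c t) = ∫ t in suppS β c, f t := by
    simp only [densf]
    rw [integral_indicator hS]
  rw [this, suppS, ← hadef, ← hbdef,
    integral_union_ae hdisj measurableSet_Icc.nullMeasurableSet hint1 hint2, hLR, hright]
  field_simp
  ring
end
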